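/- For every positive integer n, 16·T(2,3,3;n) = N(2,3,3;4(8n+8)) − N(2,3,3;8n+8). -/

import Mathlib

/-- Number of representations of `n` as `a*x^2 + b*y^2 + c*z^2` with `x,y,z : ℤ`. -/
noncomputable def N (a b c n : ℕ) : ℕ :=
  Nat.card {p : ℤ × ℤ × ℤ //
    (a : ℤ) * p.1 ^ 2 + (b : ℤ) * p.2.1 ^ 2 + (c : ℤ) * p.2.2 ^ 2 = (n : ℤ)}

/-- Number of representations of `n` as `a*x(x+1)/2 + b*y(y+1)/2 + c*z(z+1)/2` with `x,y,z : ℕ`. -/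
noncomputable def T (a b c n : ℕ) : ℕ :=
  Nat.card {p : ℕ × ℕ × ℕ //
    a * (p.1 * (p.1 + 1) / 2) + b * (p.2.1 * (p.2.1 + 1) / 2)
      + c * (p.2.2 * (p.2.2 + 1) / 2) = n}

namespace S6

def Qf (p : ℤ × ℤ × ℤ) : ℤ := 2*p.1^2 + 3*p.2.1^2 + 3*p.2.2^2
def Odd3 (p : ℤ × ℤ × ℤ) : Prop := Odd p.1 ∧ Odd p.2.1 ∧ Odd p.2.2

lemma parity {x y z M : ℤ} (h : 2*x^2+3*y^2+3*z^2 = 4*M) :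
    (Even x ∧ Even y ∧ Even z) ∨ (Odd x ∧ Odd y ∧ Odd z) := by
  have hx := Int.even_or_odd x
  have hy := Int.even_or_odd y
  have hz := Int.even_or_odd z
  rcases hx with ⟨a, rfl⟩ | ⟨a, rfl⟩ <;> rcases hy with ⟨b, rfl⟩ | ⟨b, rfl⟩ <;>
    rcases hz with ⟨c, rfl⟩ | ⟨c, rfl⟩
  · exact Or.inl ⟨⟨a, rfl⟩, ⟨b, rfl⟩, ⟨c, rfl⟩⟩
  · exfalso; obtain ⟨t, ht⟩ : ∃ t : ℤ, (3:ℤ) = 4*t :=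
      ⟨M - 2*a^2 - 3*b^2 - 3*c^2 - 3*c, by linear_combination h⟩
    omega
  · exfalso; obtain ⟨t, ht⟩ : ∃ t : ℤ, (3:ℤ) = 4*t :=
      ⟨M - 2*a^2 - 3*b^2 - 3*b - 3*c^2, by linear_combination h⟩
    omega
  · exfalso; obtain ⟨t, ht⟩ : ∃ t : ℤ, (6:ℤ) = 4*t :=
      ⟨M - 2*a^2 - 3*b^2 - 3*b - 3*c^2 - 3*c, by linear_combination h⟩
    omega
  · exfalso; obtain ⟨t, ht⟩ : ∃ t : ℤ, (2:ℤ) = 4*t :=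
      ⟨M - 2*a^2 - 2*a - 3*b^2 - 3*c^2, by linear_combination h⟩
    omega
  · exfalso; obtain ⟨t, ht⟩ : ∃ t : ℤ, (5:ℤ) = 4*t :=
      ⟨M - 2*a^2 - 2*a - 3*b^2 - 3*c^2 - 3*c, by linear_combination h⟩
    omega
  · exfalso; obtain ⟨t, ht⟩ : ∃ t : ℤ, (5:ℤ) = 4*t :=
      ⟨M - 2*a^2 - 2*a - 3*b^2 - 3*b - 3*c^2, by linear_combination h⟩
    omega
  · exact Or.inr ⟨⟨a, rfl⟩, ⟨b, rfl⟩, ⟨c, rfl⟩⟩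

lemma finQ (m : ℤ) : {p : ℤ × ℤ × ℤ | Qf p = m}.Finite := by
  apply Set.Finite.subset (Set.finite_Icc ((-m, -m, -m) : ℤ × ℤ × ℤ) (m, m, m))
  rintro ⟨x, y, z⟩ h
  simp only [Set.mem_setOf_eq, Qf] at h
  simp only [Set.mem_Icc, Prod.le_def]
  have h0 : 0 ≤ m := by nlinarith [sq_nonneg x, sq_nonneg y, sq_nonneg z]
  have hx : 2*x ≤ m + 1 ∧ -(m+1) ≤ 2*x := by constructor <;> nlinarith [sq_nonneg (x-1), sq_nonneg (x+1), sq_nonneg y, sq_nonneg z]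
  have hy : 2*y ≤ m + 1 ∧ -(m+1) ≤ 2*y := by constructor <;> nlinarith [sq_nonneg (y-1), sq_nonneg (y+1), sq_nonneg x, sq_nonneg z]
  have hz : 2*z ≤ m + 1 ∧ -(m+1) ≤ 2*z := by constructor <;> nlinarith [sq_nonneg (z-1), sq_nonneg (z+1), sq_nonneg x, sq_nonneg y]
  omega

lemma finO (m : ℤ) : {p : ℤ × ℤ × ℤ | Qf p = m ∧ Odd3 p}.Finite :=
  (finQ m).subset (fun p hp => hp.1)

def dbl (p : ℤ × ℤ × ℤ) : ℤ × ℤ × ℤ := (2*p.1, 2*p.2.1, 2*p.2.2)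

lemma split (M : ℤ) :
    Nat.card {p : ℤ × ℤ × ℤ // Qf p = 4*M} =
      Nat.card {p : ℤ × ℤ × ℤ // Qf p = M} +
      Nat.card {p : ℤ × ℤ × ℤ // Qf p = 4*M ∧ Odd3 p} := by
  have hinj : Function.Injective dbl := by
    rintro ⟨a, b, c⟩ ⟨d, e, f⟩ h
    simp only [dbl, Prod.mk.injEq] at h
    obtain ⟨h1, h2, h3⟩ := h
    simp only [Prod.mk.injEq]
    omega
  have hset : {p : ℤ × ℤ × ℤ | Qf p = 4*M} =
      dbl '' {p : ℤ × ℤ × ℤ | Qf p = M} ∪ {p : ℤ × ℤ × ℤ | Qf p = 4*M ∧ Odd3 p} := by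
    ext ⟨x, y, z⟩
    simp only [Set.mem_setOf_eq, Set.mem_union, Set.mem_image]
    constructor
    · intro h
      rcases parity (show 2*x^2+3*y^2+3*z^2 = 4*M from h) with ⟨⟨a, rfl⟩, ⟨b, rfl⟩, ⟨c, rfl⟩⟩ | ho
      · left
        refine ⟨(a, b, c), ?_, ?_⟩
        · simp only [Set.mem_setOf_eq, Qf] at h ⊢; linarith
        · simp [dbl]; constructor <;> [ring; constructor <;> ring]
      · exact Or.inr ⟨h, ho⟩
    · rintro (⟨⟨a, b, c⟩, hq, heq⟩ | ⟨h, _⟩)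
      · simp only [dbl, Prod.mk.injEq] at heq
        obtain ⟨h1, h2, h3⟩ := heq
        simp only [Set.mem_setOf_eq, Qf] at hq ⊢
        subst h1 h2 h3; linarith
      · exact h
  have e1 : Nat.card {p : ℤ × ℤ × ℤ // Qf p = 4*M} = ({p : ℤ × ℤ × ℤ | Qf p = 4*M}).ncard :=
    Nat.card_coe_set_eq _
  have e2 : Nat.card {p : ℤ × ℤ × ℤ // Qf p = M} = ({p : ℤ × ℤ × ℤ | Qf p = M}).ncard :=
    Nat.card_coe_set_eq _
  have e3 : Nat.card {p : ℤ × ℤ × ℤ // Qf p = 4*M ∧ Odd3 p} =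
      ({p : ℤ × ℤ × ℤ | Qf p = 4*M ∧ Odd3 p}).ncard := Nat.card_coe_set_eq _
  rw [e1, e2, e3, hset,
    Set.ncard_union_eq ?_ (((finQ M).image dbl)) (finO (4*M)),
    Set.ncard_image_of_injective _ hinj]
  · rw [Set.disjoint_left]
    rintro ⟨x, y, z⟩ ⟨⟨a, b, c⟩, _, heq⟩ ⟨_, hodd, _⟩
    simp only [dbl, Prod.mk.injEq] at heq
    obtain ⟨h1, _, _⟩ := heq
    rw [← h1] at hodd
    exact (Int.not_odd_iff_even.mpr ⟨a, by ring⟩) hodd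


def eB : Bool → ℤ
  | true => 1
  | false => -1

def sB (p : ℤ × ℤ × ℤ) (q : Bool × Bool × Bool) : ℤ :=
  2*p.1*eB q.1 + 3*p.2.1*eB q.2.1 + 3*p.2.2*eB q.2.2
def V4 (p : ℤ × ℤ × ℤ) (q : Bool × Bool × Bool) : Prop :=
  sB p q % 8 = 4 ∧ (4*p.1 - sB p q * eB q.1) % 16 = 8 ∧
    (4*p.2.1 - sB p q * eB q.2.1) % 16 = 8 ∧ (4*p.2.2 - sB p q * eB q.2.2) % 16 = 8
def negq (q : Bool × Bool × Bool) : Bool × Bool × Bool := (!q.1, !q.2.1, !q.2.2)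

lemma eB_not (b : Bool) : eB (!b) = - eB b := by cases b <;> simp [eB]
lemma eB_sq (b : Bool) : eB b ^ 2 = 1 := by cases b <;> simp [eB]
lemma eB_cases (b : Bool) : eB b = 1 ∨ eB b = -1 := by cases b <;> simp [eB]

lemma sB_negq (p : ℤ × ℤ × ℤ) (q : Bool × Bool × Bool) : sB p (negq q) = - sB p q := by
  simp [sB, negq, eB_not]; ring

lemma V4_negq (p : ℤ × ℤ × ℤ) (q : Bool × Bool × Bool) : V4 p (negq q) ↔ V4 p q := by
  obtain ⟨b1, b2, b3⟩ := q
  cases b1 <;> cases b2 <;> cases b3 <;>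
    simp only [V4, negq, sB, eB, Bool.not_true, Bool.not_false] <;>
    constructor <;> (intro h; ring_nf; ring_nf at h; omega)

def tB (p : ℤ × ℤ × ℤ) : Bool := decide ((p.2.1 + p.2.2) % 4 = 0)

lemma L1 (p : ℤ × ℤ × ℤ) (h : Odd3 p) (q : Bool × Bool × Bool) :
    sB p q % 4 = 2 ↔ q.2.2 = (q.2.1 == tB p) := by
  obtain ⟨⟨x, hx⟩, ⟨y, hy⟩, ⟨z, hz⟩⟩ := h
  obtain ⟨b1, b2, b3⟩ := q
  have h4 : (p.2.1 + p.2.2) % 4 = 0 ∨ (p.2.1 + p.2.2) % 4 = 2 := by omega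
  rcases h4 with h4 | h4
  · have ht : tB p = true := by simp [tB, h4]
    rw [ht]; rw [hy, hz] at h4
    cases b1 <;> cases b2 <;> cases b3 <;>
      simp only [sB, eB, hx, hy, hz] <;> simp <;> omega
  · have ht : tB p = false := by simp [tB]; omega
    rw [ht]; rw [hy, hz] at h4
    cases b1 <;> cases b2 <;> cases b3 <;>
      simp only [sB, eB, hx, hy, hz] <;> simp <;> omega

def eZ : Bool → ZMod 32
  | true => 1
  | false => -1

def CC (a b c : ZMod 32) (q : Bool × Bool × Bool) : Prop :=
  let e1 := eZ q.1; let e2 := eZ q.2.1; let e3 := eZ q.2.2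
  let s := 2*a*e1 + 3*b*e2 + 3*c*e3
  4*s = 16 ∧ 2*(4*a - s*e1) = 16 ∧ 2*(4*b - s*e2) = 16 ∧ 2*(4*c - s*e3) = 16

instance (a b c q) : Decidable (CC a b c q) := by unfold CC; infer_instance

lemma CC_iff (a b c : ZMod 32) (q : Bool × Bool × Bool) :
    CC a b c q ↔ (4*(2*a*eZ q.1 + 3*b*eZ q.2.1 + 3*c*eZ q.2.2) = 16 ∧
      2*(4*a - (2*a*eZ q.1 + 3*b*eZ q.2.1 + 3*c*eZ q.2.2)*eZ q.1) = 16 ∧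
      2*(4*b - (2*a*eZ q.1 + 3*b*eZ q.2.1 + 3*c*eZ q.2.2)*eZ q.2.1) = 16 ∧
      2*(4*c - (2*a*eZ q.1 + 3*b*eZ q.2.1 + 3*c*eZ q.2.2)*eZ q.2.2) = 16) := Iff.rfl

set_option maxRecDepth 100000 in
set_option maxHeartbeats 4000000 in
lemma key32 : ∀ a b c : ZMod 16,
    2*(2*(a.val:ZMod 32)+1)^2+3*(2*(b.val:ZMod 32)+1)^2+3*(2*(c.val:ZMod 32)+1)^2 = 0 →
    (∃ p : Bool × Bool, CC (2*(a.val:ZMod 32)+1) (2*(b.val:ZMod 32)+1) (2*(c.val:ZMod 32)+1) (true, p)) ∧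
    (∀ p p' : Bool × Bool,
      CC (2*(a.val:ZMod 32)+1) (2*(b.val:ZMod 32)+1) (2*(c.val:ZMod 32)+1) (true, p) →
      CC (2*(a.val:ZMod 32)+1) (2*(b.val:ZMod 32)+1) (2*(c.val:ZMod 32)+1) (true, p') →
      p' = p) := by decide

lemma c32 (t : ℤ) : (((t : ℤ) : ZMod 32) = 16) ↔ (32:ℤ) ∣ (t - 16) := by
  rw [← sub_eq_zero, show ((t : ZMod 32) - 16) = ((t - 16 : ℤ) : ZMod 32) by push_cast; ring,
    ZMod.intCast_zmod_eq_zero_iff_dvd]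
  norm_cast

lemma eB_cast (b : Bool) : ((eB b : ℤ) : ZMod 32) = eZ b := by cases b <;> simp [eB, eZ]

lemma zmodrep (x : ℤ) (hx : Odd x) :
    ∃ a : ZMod 16, ((x : ℤ) : ZMod 32) = 2*(a.val : ZMod 32)+1 := by
  obtain ⟨k, hk⟩ := hx
  refine ⟨((k : ℤ) : ZMod 16), ?_⟩
  have ha : (((((k : ℤ) : ZMod 16)).val : ℕ) : ℤ) = k % 16 := ZMod.val_intCast _
  have h32 : (32:ℤ) ∣ (x - (2*((((k : ℤ) : ZMod 16)).val : ℤ)+1)) := by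
    rw [ha]; omega
  calc ((x:ℤ) : ZMod 32)
      = (((2*((((k : ℤ) : ZMod 16)).val : ℤ)+1) : ℤ) : ZMod 32) := by
        rw [← sub_eq_zero, ← Int.cast_sub, ZMod.intCast_zmod_eq_zero_iff_dvd]; exact h32
    _ = 2*(((((k : ℤ) : ZMod 16)).val : ℕ) : ZMod 32)+1 := by push_cast; ring

lemma L2Z (p : ℤ × ℤ × ℤ) (h : Odd3 p) (hQ : (32:ℤ) ∣ Qf p) :
    (∃ pr : Bool × Bool, V4 p (true, pr.1, pr.2)) ∧
    ∀ pr pr' : Bool × Bool, V4 p (true, pr.1, pr.2) → V4 p (true, pr'.1, pr'.2) → pr' = pr := by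
  obtain ⟨a, hA⟩ := zmodrep p.1 h.1
  obtain ⟨b, hB⟩ := zmodrep p.2.1 h.2.1
  obtain ⟨c, hC⟩ := zmodrep p.2.2 h.2.2
  have hq0 : 2*(2*(a.val:ZMod 32)+1)^2+3*(2*(b.val:ZMod 32)+1)^2+3*(2*(c.val:ZMod 32)+1)^2 = 0 := by
    rw [← hA, ← hB, ← hC]
    obtain ⟨t, ht⟩ := hQ
    have : ((Qf p : ℤ) : ZMod 32) = 0 := by
      rw [ht]; push_cast
      rw [show (32 : ZMod 32) = 0 from by decide]; ring
    rw [← this]; unfold Qf; push_cast; ring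
  have hs : ∀ q : Bool × Bool × Bool, ((sB p q : ℤ) : ZMod 32) =
      2*(2*(a.val:ZMod 32)+1)*eZ q.1 + 3*(2*(b.val:ZMod 32)+1)*eZ q.2.1
        + 3*(2*(c.val:ZMod 32)+1)*eZ q.2.2 := by
    intro q
    unfold sB; push_cast
    rw [hA, hB, hC, eB_cast, eB_cast, eB_cast]
  have hV4 : ∀ q : Bool × Bool × Bool,
      (V4 p q ↔ CC (2*(a.val:ZMod 32)+1) (2*(b.val:ZMod 32)+1) (2*(c.val:ZMod 32)+1) q) := by
    intro q
    rw [CC_iff, ← hs q]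
    unfold V4
    have c1 : (4*((sB p q : ℤ) : ZMod 32) = 16) ↔ (32:ℤ) ∣ (4*sB p q - 16) := by
      rw [show 4*((sB p q : ℤ) : ZMod 32) = ((4*sB p q : ℤ) : ZMod 32) from by push_cast; ring, c32]
    have c2 : ∀ (x : ℤ) (bb : Bool), (2*(4*((x:ℤ):ZMod 32) - ((sB p q : ℤ) : ZMod 32)*eZ bb) = 16) ↔
        (32:ℤ) ∣ (2*(4*x - sB p q * eB bb) - 16) := by
      intro x bb
      rw [show 2*(4*((x:ℤ):ZMod 32) - ((sB p q:ℤ):ZMod 32)*eZ bb)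
          = ((2*(4*x - sB p q * eB bb) : ℤ) : ZMod 32) from by push_cast; rw [eB_cast]; try ring, c32]
    rw [c1, ← hA, ← hB, ← hC, c2 p.1 q.1, c2 p.2.1 q.2.1, c2 p.2.2 q.2.2]
    omega
  obtain ⟨hex, huni⟩ := key32 a b c hq0
  constructor
  · obtain ⟨pr, hpr⟩ := hex
    exact ⟨pr, (hV4 (true, pr.1, pr.2)).2 hpr⟩
  · intro pr pr' h1 h2
    exact huni pr pr' ((hV4 (true, pr.1, pr.2)).1 h1) ((hV4 (true, pr'.1, pr'.2)).1 h2)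

def uOf (v : ℤ × ℤ × ℤ) (q : Bool × Bool × Bool) : ℤ × ℤ × ℤ :=
  ((v.1 - (sB v q / 4) * eB q.1)/2, (v.2.1 - (sB v q / 4) * eB q.2.1)/2,
    (v.2.2 - (sB v q / 4) * eB q.2.2)/2)

def vOf (u : ℤ × ℤ × ℤ) (q : Bool × Bool × Bool) : ℤ × ℤ × ℤ :=
  (2*u.1 - (sB u q / 2) * eB q.1, 2*u.2.1 - (sB u q / 2) * eB q.2.1,
    2*u.2.2 - (sB u q / 2) * eB q.2.2)

lemma uOf_spec (v : ℤ × ℤ × ℤ) (q : Bool × Bool × Bool) (hV : V4 v q) (m : ℤ)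
    (hQv : Qf v = 4*m) :
    2*(uOf v q).1 = v.1 - (sB v q / 4) * eB q.1 ∧
    2*(uOf v q).2.1 = v.2.1 - (sB v q / 4) * eB q.2.1 ∧
    2*(uOf v q).2.2 = v.2.2 - (sB v q / 4) * eB q.2.2 ∧
    Odd3 (uOf v q) ∧ Qf (uOf v q) = m ∧ sB (uOf v q) q = -(2*(sB v q / 4)) := by
  obtain ⟨h1, h2, h3, h4⟩ := hV
  have he1 := eB_sq q.1
  have he2 := eB_sq q.2.1
  have he3 := eB_sq q.2.2
  have hσ : sB v q = 4*(sB v q / 4) ∧ (sB v q / 4) % 2 = 1 := by omega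
  set σ := sB v q / 4 with hσd
  have hc1 : 2*((v.1 - σ * eB q.1)/2) = v.1 - σ * eB q.1 ∧
      ((v.1 - σ * eB q.1)/2) % 2 = 1 := by
    rcases eB_cases q.1 with h|h <;> rw [h] at h2 ⊢ <;> omega
  have hc2 : 2*((v.2.1 - σ * eB q.2.1)/2) = v.2.1 - σ * eB q.2.1 ∧
      ((v.2.1 - σ * eB q.2.1)/2) % 2 = 1 := by
    rcases eB_cases q.2.1 with h|h <;> rw [h] at h3 ⊢ <;> omega
  have hc3 : 2*((v.2.2 - σ * eB q.2.2)/2) = v.2.2 - σ * eB q.2.2 ∧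
      ((v.2.2 - σ * eB q.2.2)/2) % 2 = 1 := by
    rcases eB_cases q.2.2 with h|h <;> rw [h] at h4 ⊢ <;> omega
  have hu1 : 2*(uOf v q).1 = v.1 - σ * eB q.1 := hc1.1
  have hu2 : 2*(uOf v q).2.1 = v.2.1 - σ * eB q.2.1 := hc2.1
  have hu3 : 2*(uOf v q).2.2 = v.2.2 - σ * eB q.2.2 := hc3.1
  have hodd : Odd3 (uOf v q) :=
    ⟨Int.odd_iff.mpr hc1.2, Int.odd_iff.mpr hc2.2, Int.odd_iff.mpr hc3.2⟩
  have hsdef : 2*v.1*eB q.1 + 3*v.2.1*eB q.2.1 + 3*v.2.2*eB q.2.2 = 4*σ := by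
    rw [← hσ.1]; rfl
  have hQu4 : 4 * Qf (uOf v q) = 4 * m := by
    unfold Qf at hQv ⊢
    linear_combination hQv + 2*(2*(uOf v q).1 + v.1 - σ*eB q.1)*hu1
      + 3*(2*(uOf v q).2.1 + v.2.1 - σ*eB q.2.1)*hu2
      + 3*(2*(uOf v q).2.2 + v.2.2 - σ*eB q.2.2)*hu3
      - 2*σ*hsdef + σ^2*(2*he1+3*he2+3*he3)
  have hsud : 2*sB (uOf v q) q = -(4*σ) := by
    show 2*(2*(uOf v q).1*eB q.1 + 3*(uOf v q).2.1*eB q.2.1 + 3*(uOf v q).2.2*eB q.2.2) = -(4*σ)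
    linear_combination hsdef - σ*(2*he1+3*he2+3*he3)
      + 2*eB q.1*hu1 + 3*eB q.2.1*hu2 + 3*eB q.2.2*hu3
  exact ⟨hu1, hu2, hu3, hodd, by linarith, by omega⟩

lemma vOf_spec (u : ℤ × ℤ × ℤ) (q : Bool × Bool × Bool) (hs2 : sB u q % 4 = 2)
    (hou : Odd3 u) (m : ℤ) (hQu : Qf u = m) :
    Odd3 (vOf u q) ∧ Qf (vOf u q) = 4*m ∧ V4 (vOf u q) q ∧
      sB (vOf u q) q = -(4*(sB u q / 2)) := by
  have he1 := eB_sq q.1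
  have he2 := eB_sq q.2.1
  have he3 := eB_sq q.2.2
  have hτ : sB u q = 2*(sB u q / 2) ∧ (sB u q / 2) % 2 = 1 := by omega
  set τ := sB u q / 2 with hτd
  obtain ⟨ho1, ho2, ho3⟩ := hou
  rw [Int.odd_iff] at ho1 ho2 ho3
  have hv1 : (vOf u q).1 = 2*u.1 - τ * eB q.1 := rfl
  have hv2 : (vOf u q).2.1 = 2*u.2.1 - τ * eB q.2.1 := rfl
  have hv3 : (vOf u q).2.2 = 2*u.2.2 - τ * eB q.2.2 := rfl
  have hodd : Odd3 (vOf u q) := by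
    refine ⟨Int.odd_iff.mpr ?_, Int.odd_iff.mpr ?_, Int.odd_iff.mpr ?_⟩
    · rw [hv1]; rcases eB_cases q.1 with h|h <;> rw [h] <;> omega
    · rw [hv2]; rcases eB_cases q.2.1 with h|h <;> rw [h] <;> omega
    · rw [hv3]; rcases eB_cases q.2.2 with h|h <;> rw [h] <;> omega
  have hsdefu : 2*u.1*eB q.1 + 3*u.2.1*eB q.2.1 + 3*u.2.2*eB q.2.2 = 2*τ := by
    rw [← hτ.1]; rfl
  have hsv : sB (vOf u q) q = -(4*τ) := by
    show 2*(vOf u q).1*eB q.1 + 3*(vOf u q).2.1*eB q.2.1 + 3*(vOf u q).2.2*eB q.2.2 = -(4*τ)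
    rw [hv1, hv2, hv3]
    linear_combination 2*hsdefu - τ*(2*he1+3*he2+3*he3)
  have hQv : Qf (vOf u q) = 4*m := by
    unfold Qf at hQu ⊢
    rw [hv1, hv2, hv3]
    linear_combination 4*hQu - 4*τ*hsdefu + τ^2*(2*he1+3*he2+3*he3)
  refine ⟨hodd, hQv, ⟨by omega, ?_, ?_, ?_⟩, hsv⟩
  · have h8 : 4*(vOf u q).1 - sB (vOf u q) q * eB q.1 = 8*u.1 := by
      rw [hsv, hv1]; ring
    rw [h8]; omega
  · have h8 : 4*(vOf u q).2.1 - sB (vOf u q) q * eB q.2.1 = 8*u.2.1 := by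
      rw [hsv, hv2]; ring
    rw [h8]; omega
  · have h8 : 4*(vOf u q).2.2 - sB (vOf u q) q * eB q.2.2 = 8*u.2.2 := by
      rw [hsv, hv3]; ring
    rw [h8]; omega

noncomputable def wst (v : ℤ × ℤ × ℤ) : Bool × Bool :=
  haveI := Classical.propDecidable (Odd3 v ∧ (32:ℤ) ∣ Qf v)
  if h : Odd3 v ∧ (32:ℤ) ∣ Qf v then (L2Z v h.1 h.2).1.choose else (true, true)

lemma wst_spec (v : ℤ × ℤ × ℤ) (h1 : Odd3 v) (h2 : (32:ℤ) ∣ Qf v) :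
    V4 v (true, (wst v).1, (wst v).2) := by
  rw [wst]
  rw [dif_pos ⟨h1, h2⟩]
  exact (L2Z v h1 h2).1.choose_spec

lemma wst_uniq (v : ℤ × ℤ × ℤ) (h1 : Odd3 v) (h2 : (32:ℤ) ∣ Qf v) (pr : Bool × Bool)
    (h : V4 v (true, pr.1, pr.2)) : pr = wst v := by
  rw [wst]
  rw [dif_pos ⟨h1, h2⟩]
  exact ((L2Z v h1 h2).2 (L2Z v h1 h2).1.choose pr (L2Z v h1 h2).1.choose_spec h)

noncomputable def Fq (v : ℤ × ℤ × ℤ) (ε : Bool) : Bool × Bool × Bool :=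
  if ε then (true, (wst v).1, (wst v).2) else negq (true, (wst v).1, (wst v).2)

lemma Fq_fst (v : ℤ × ℤ × ℤ) (ε : Bool) : (Fq v ε).1 = ε := by
  cases ε <;> simp [Fq, negq]

lemma Fq_V4 (v : ℤ × ℤ × ℤ) (h1 : Odd3 v) (h2 : (32:ℤ) ∣ Qf v) (ε : Bool) :
    V4 v (Fq v ε) := by
  cases ε
  · rw [Fq, if_neg (by simp)]
    exact (V4_negq v _).mpr (wst_spec v h1 h2)
  · rw [Fq, if_pos rfl]
    exact wst_spec v h1 h2

def Bq (u : ℤ × ℤ × ℤ) (b : Bool × Bool) : Bool × Bool × Bool := (b.1, b.2, b.2 == tB u)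

lemma prodext3 {α β γ : Type*} {a b : α × β × γ} (h1 : a.1 = b.1) (h2 : a.2.1 = b.2.1)
    (h3 : a.2.2 = b.2.2) : a = b := by
  obtain ⟨a1, a2, a3⟩ := a; obtain ⟨b1, b2, b3⟩ := b
  simp_all

noncomputable def Fdes (m : ℤ) (h8 : (8:ℤ) ∣ m)
    (x : {p : ℤ × ℤ × ℤ // Qf p = 4*m ∧ Odd3 p} × Bool) :
    {p : ℤ × ℤ × ℤ // Qf p = m ∧ Odd3 p} × (Bool × Bool) :=
  have h32 : (32:ℤ) ∣ Qf x.1.1 := by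
    obtain ⟨t, rfl⟩ := h8; rw [x.1.2.1]; exact ⟨t, by ring⟩
  have spec := uOf_spec x.1.1 (Fq x.1.1 x.2) (Fq_V4 x.1.1 x.1.2.2 h32 x.2) m x.1.2.1
  (⟨uOf x.1.1 (Fq x.1.1 x.2), spec.2.2.2.2.1, spec.2.2.2.1⟩,
    ((Fq x.1.1 x.2).1, (Fq x.1.1 x.2).2.1))

noncomputable def Gdes (m : ℤ)
    (y : {p : ℤ × ℤ × ℤ // Qf p = m ∧ Odd3 p} × (Bool × Bool)) :
    {p : ℤ × ℤ × ℤ // Qf p = 4*m ∧ Odd3 p} × Bool :=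
  have hL : sB y.1.1 (Bq y.1.1 y.2) % 4 = 2 := (L1 y.1.1 y.1.2.2 (Bq y.1.1 y.2)).mpr rfl
  have spec := vOf_spec y.1.1 (Bq y.1.1 y.2) hL y.1.2.2 m y.1.2.1
  (⟨vOf y.1.1 (Bq y.1.1 y.2), spec.2.1, spec.1⟩, y.2.1)

lemma descent (m : ℤ) (h8 : (8:ℤ) ∣ m) :
    Nat.card {p : ℤ × ℤ × ℤ // Qf p = 4*m ∧ Odd3 p} * 2
      = Nat.card {p : ℤ × ℤ × ℤ // Qf p = m ∧ Odd3 p} * 4 := by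
  have left : ∀ x, Gdes m (Fdes m h8 x) = x := by
    rintro ⟨⟨v, hQv, hov⟩, ε⟩
    have h32 : (32:ℤ) ∣ Qf v := by
      obtain ⟨t, rfl⟩ := h8; rw [hQv]; exact ⟨t, by ring⟩
    have hV : V4 v (Fq v ε) := Fq_V4 v hov h32 ε
    obtain ⟨hu1, hu2, hu3, hou, hQu, hsu⟩ := uOf_spec v (Fq v ε) hV m hQv
    have hσ : (sB v (Fq v ε) / 4) % 2 = 1 := by have := hV.1; omega
    have hsu4 : sB (uOf v (Fq v ε)) (Fq v ε) % 4 = 2 := by omega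
    have hq3 : (Fq v ε).2.2 = ((Fq v ε).2.1 == tB (uOf v (Fq v ε))) :=
      (L1 (uOf v (Fq v ε)) hou (Fq v ε)).mp hsu4
    have hBq : Bq (uOf v (Fq v ε)) ((Fq v ε).1, (Fq v ε).2.1) = Fq v ε := by
      rw [Bq, ← hq3]
    have hτ : sB (uOf v (Fq v ε)) (Fq v ε) / 2 = -(sB v (Fq v ε) / 4) := by omega
    have hvOf : vOf (uOf v (Fq v ε)) (Fq v ε) = v := by
      refine prodext3 ?_ ?_ ?_
      · show 2*(uOf v (Fq v ε)).1 - (sB (uOf v (Fq v ε)) (Fq v ε) / 2) * eB (Fq v ε).1 = v.1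
        rw [hτ]; linear_combination hu1
      · show 2*(uOf v (Fq v ε)).2.1 - (sB (uOf v (Fq v ε)) (Fq v ε) / 2) * eB (Fq v ε).2.1 = v.2.1
        rw [hτ]; linear_combination hu2
      · show 2*(uOf v (Fq v ε)).2.2 - (sB (uOf v (Fq v ε)) (Fq v ε) / 2) * eB (Fq v ε).2.2 = v.2.2
        rw [hτ]; linear_combination hu3
    refine Prod.ext (Subtype.ext ?_) ?_
    · show vOf (uOf v (Fq v ε)) (Bq (uOf v (Fq v ε)) ((Fq v ε).1, (Fq v ε).2.1)) = v
      rw [hBq, hvOf]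
    · show (Fq v ε).1 = ε
      exact Fq_fst v ε
  have right : ∀ y, Fdes m h8 (Gdes m y) = y := by
    rintro ⟨⟨u, hQu, hou⟩, b⟩
    have hL : sB u (Bq u b) % 4 = 2 := (L1 u hou (Bq u b)).mpr rfl
    obtain ⟨hov, hQv, hV4, hsv⟩ := vOf_spec u (Bq u b) hL hou m hQu
    have h32 : (32:ℤ) ∣ Qf (vOf u (Bq u b)) := by
      obtain ⟨t, rfl⟩ := h8; rw [hQv]; exact ⟨t, by ring⟩
    have hFq : Fq (vOf u (Bq u b)) b.1 = Bq u b := by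
      rcases hb : b.1 with _ | _
      · -- b.1 = false
        have hVn : V4 (vOf u (Bq u b)) (negq (Bq u b)) := (V4_negq _ _).mpr hV4
        have huniq : ((!b.2 : Bool), !(b.2 == tB u)) = wst (vOf u (Bq u b)) := by
          apply wst_uniq _ hov h32
          have : negq (Bq u b) = (true, !b.2, !(b.2 == tB u)) := by
            rw [Bq, negq, hb]; simp
          rw [← this]; exact hVn
        rw [Fq, if_neg (by simp), ← huniq]
        rw [Bq, negq]
        simp [hb]
      · -- b.1 = true
        have huniq : ((b.2 : Bool), (b.2 == tB u)) = wst (vOf u (Bq u b)) := by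
          apply wst_uniq _ hov h32
          have : Bq u b = (true, b.2, (b.2 == tB u)) := by rw [Bq, hb]
          rw [← this]; exact hV4
        rw [Fq, if_pos rfl, ← huniq]
        rw [Bq, hb]
    obtain ⟨hu1, hu2, hu3, _, _, _⟩ := uOf_spec (vOf u (Bq u b)) (Bq u b)
      hV4 m hQv
    have hσf : sB (vOf u (Bq u b)) (Bq u b) / 4 = -(sB u (Bq u b) / 2) := by omega
    have hv1 : (vOf u (Bq u b)).1 = 2*u.1 - (sB u (Bq u b) / 2) * eB (Bq u b).1 := rfl
    have hv2 : (vOf u (Bq u b)).2.1 = 2*u.2.1 - (sB u (Bq u b) / 2) * eB (Bq u b).2.1 := rfl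
    have hv3 : (vOf u (Bq u b)).2.2 = 2*u.2.2 - (sB u (Bq u b) / 2) * eB (Bq u b).2.2 := rfl
    rw [hσf] at hu1 hu2 hu3
    rw [hv1] at hu1; rw [hv2] at hu2; rw [hv3] at hu3
    have huOf : uOf (vOf u (Bq u b)) (Bq u b) = u := by
      refine prodext3 ?_ ?_ ?_ <;> [linarith [hu1]; linarith [hu2]; linarith [hu3]]
    refine Prod.ext (Subtype.ext ?_) ?_
    · show uOf (vOf u (Bq u b)) (Fq (vOf u (Bq u b)) b.1) = u
      rw [hFq, huOf]
    · show ((Fq (vOf u (Bq u b)) b.1).1, (Fq (vOf u (Bq u b)) b.1).2.1) = b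
      rw [hFq]
      rfl
  have e : ({p : ℤ × ℤ × ℤ // Qf p = 4*m ∧ Odd3 p} × Bool) ≃
      ({p : ℤ × ℤ × ℤ // Qf p = m ∧ Odd3 p} × (Bool × Bool)) :=
    ⟨Fdes m h8, Gdes m, left, right⟩
  have hcard := Nat.card_congr e
  rw [Nat.card_prod, Nat.card_prod] at hcard
  simp only [Nat.card_eq_fintype_card, Fintype.card_bool, Fintype.card_prod] at hcard
  omega

def fromZ (b : Bool) (a : ℕ) : ℤ := if b then 2*(a:ℤ)+1 else -(2*(a:ℤ)+1)
def toS (x : ℤ) : Bool := decide (0 < x)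
def toT (x : ℤ) : ℕ := (x.natAbs - 1)/2

lemma fromZ_sq (b : Bool) (a : ℕ) : (fromZ b a)^2 = (2*(a:ℤ)+1)^2 := by
  cases b <;> simp [fromZ] <;> ring

lemma fromZ_odd (b : Bool) (a : ℕ) : Odd (fromZ b a) := by
  cases b
  · exact ⟨-(a:ℤ)-1, by simp [fromZ]; ring⟩
  · exact ⟨(a:ℤ), by simp [fromZ]⟩

lemma toS_fromZ (b : Bool) (a : ℕ) : toS (fromZ b a) = b := by
  cases b <;> simp [toS, fromZ] <;> omega

lemma toT_fromZ (b : Bool) (a : ℕ) : toT (fromZ b a) = a := by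
  cases b <;> simp [toT, fromZ] <;> omega

lemma fromZ_toS_toT (x : ℤ) (hx : Odd x) : fromZ (toS x) (toT x) = x := by
  rw [Int.odd_iff] at hx
  by_cases h : 0 < x
  · simp only [fromZ, toS, toT, h, decide_eq_true_eq, if_pos]
    omega
  · simp only [fromZ, toS, toT]
    show (if decide (0 < x) = true then 2 * (((x.natAbs - 1) / 2 : ℕ) : ℤ) + 1 else -(2 * (((x.natAbs - 1) / 2 : ℕ) : ℤ) + 1)) = x
    rw [if_neg (by simp [h])]
    omega

lemma teq (b1 b2 b3 : Bool) (a1 a2 a3 n : ℕ) :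
    Qf (fromZ b1 a1, fromZ b2 a2, fromZ b3 a3) = 8*(n:ℤ)+8 ↔
      2*(a1*(a1+1)/2) + 3*(a2*(a2+1)/2) + 3*(a3*(a3+1)/2) = n := by
  unfold Qf
  simp only [fromZ_sq]
  have hd1 : 2 ∣ a1*(a1+1) := (Nat.even_mul_succ_self a1).two_dvd
  have hd2 : 2 ∣ a2*(a2+1) := (Nat.even_mul_succ_self a2).two_dvd
  have hd3 : 2 ∣ a3*(a3+1) := (Nat.even_mul_succ_self a3).two_dvd
  have h1 : a1*(a1+1) = 2*(a1*(a1+1)/2) := (Nat.mul_div_cancel' hd1).symm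
  have h2 : a2*(a2+1) = 2*(a2*(a2+1)/2) := (Nat.mul_div_cancel' hd2).symm
  have h3 : a3*(a3+1) = 2*(a3*(a3+1)/2) := (Nat.mul_div_cancel' hd3).symm
  have h1' : (a1:ℤ)*(a1+1) = 2*((a1*(a1+1)/2 : ℕ) : ℤ) := by exact_mod_cast h1
  have h2' : (a2:ℤ)*(a2+1) = 2*((a2*(a2+1)/2 : ℕ) : ℤ) := by exact_mod_cast h2
  have h3' : (a3:ℤ)*(a3+1) = 2*((a3*(a3+1)/2 : ℕ) : ℤ) := by exact_mod_cast h3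
  constructor
  · intro h
    have hZ : 16*((a1*(a1+1)/2 : ℕ) : ℤ) + 24*((a2*(a2+1)/2 : ℕ) : ℤ)
        + 24*((a3*(a3+1)/2 : ℕ) : ℤ) + 8 = 8*(n:ℤ)+8 := by
      linear_combination h - 8*h1' - 12*h2' - 12*h3'
    omega
  · intro h
    have hZ' : 2*((a1*(a1+1)/2 : ℕ) : ℤ) + 3*((a2*(a2+1)/2 : ℕ) : ℤ)
        + 3*((a3*(a3+1)/2 : ℕ) : ℤ) = (n:ℤ) := by exact_mod_cast h
    linear_combination 8*hZ' + 8*h1' + 12*h2' + 12*h3'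

noncomputable def Etri (n : ℕ) :
    {p : ℤ × ℤ × ℤ // Qf p = 8*(n:ℤ)+8 ∧ Odd3 p} ≃
    ((Bool × Bool × Bool) ×
      {p : ℕ × ℕ × ℕ // 2*(p.1*(p.1+1)/2) + 3*(p.2.1*(p.2.1+1)/2)
        + 3*(p.2.2*(p.2.2+1)/2) = n}) where
  toFun x := ((toS x.1.1, toS x.1.2.1, toS x.1.2.2),
    ⟨(toT x.1.1, toT x.1.2.1, toT x.1.2.2), by
      refine (teq (toS x.1.1) (toS x.1.2.1) (toS x.1.2.2) (toT x.1.1) (toT x.1.2.1)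
        (toT x.1.2.2) n).mp ?_
      rw [fromZ_toS_toT x.1.1 x.2.2.1, fromZ_toS_toT x.1.2.1 x.2.2.2.1,
        fromZ_toS_toT x.1.2.2 x.2.2.2.2]
      exact x.2.1⟩)
  invFun y := ⟨(fromZ y.1.1 y.2.1.1, fromZ y.1.2.1 y.2.1.2.1, fromZ y.1.2.2 y.2.1.2.2),
    (teq _ _ _ _ _ _ n).mpr y.2.2,
    fromZ_odd _ _, fromZ_odd _ _, fromZ_odd _ _⟩
  left_inv x := by
    apply Subtype.ext
    exact prodext3 (fromZ_toS_toT x.1.1 x.2.2.1) (fromZ_toS_toT x.1.2.1 x.2.2.2.1)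
      (fromZ_toS_toT x.1.2.2 x.2.2.2.2)
  right_inv y := by
    refine Prod.ext (prodext3 ?_ ?_ ?_) (Subtype.ext (prodext3 ?_ ?_ ?_)) <;>
      first
        | exact toS_fromZ _ _
        | exact toT_fromZ _ _

lemma card_tri (n : ℕ) :
    Nat.card {p : ℤ × ℤ × ℤ // Qf p = 8*(n:ℤ)+8 ∧ Odd3 p} =
      8 * Nat.card {p : ℕ × ℕ × ℕ // 2*(p.1*(p.1+1)/2) + 3*(p.2.1*(p.2.1+1)/2)
        + 3*(p.2.2*(p.2.2+1)/2) = n} := by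
  rw [Nat.card_congr (Etri n), Nat.card_prod]
  simp [Nat.card_eq_fintype_card]

end S6

theorem stmt_6 (n : ℕ) (hn : 0 < n) :
    (16 * T 2 3 3 n : ℤ) = (N 2 3 3 (4 * (8 * n + 8)) : ℤ) - (N 2 3 3 (8 * n + 8) : ℤ) := by
  have hN1 : N 2 3 3 (4*(8*n+8)) =
      Nat.card {p : ℤ × ℤ × ℤ // S6.Qf p = 4*(8*(n:ℤ)+8)} := by
    unfold N
    refine Nat.card_congr (Equiv.subtypeEquivRight fun p => ?_)
    unfold S6.Qf
    push_cast
    constructor <;> intro h <;> linarith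
  have hN2 : N 2 3 3 (8*n+8) =
      Nat.card {p : ℤ × ℤ × ℤ // S6.Qf p = 8*(n:ℤ)+8} := by
    unfold N
    refine Nat.card_congr (Equiv.subtypeEquivRight fun p => ?_)
    unfold S6.Qf
    push_cast
    constructor <;> intro h <;> linarith
  have hT : T 2 3 3 n = Nat.card {p : ℕ × ℕ × ℕ // 2*(p.1*(p.1+1)/2)
      + 3*(p.2.1*(p.2.1+1)/2) + 3*(p.2.2*(p.2.2+1)/2) = n} := rfl
  have hsplit := S6.split (8*(n:ℤ)+8)
  have hdes := S6.descent (8*(n:ℤ)+8) ⟨(n:ℤ)+1, by ring⟩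
  have htri := S6.card_tri n
  rw [hN1, hN2, hT]
  omega
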